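/- Label coverage guarantee: Let Λ be a random probability vector over a finite label set Y with ℙ[Λ ∈ c] ≥ 1 − α, and let Y_{n+1} be a label that, conditionally on Λ = λ, is distributed according to λ. If S ⊆ Y satisfies inf_{λ∈c} Σ_{k∈S} λ_k ≥ 1 − δ, then ℙ[Y_{n+1} ∈ S] ≥ (1 − δ)(1 − α). -/

import Mathlib

open MeasureTheory
open scoped ENNReal ProbabilityTheory

/-- Label coverage guarantee: if `ℙ[Λ ∈ c] ≥ 1 - α`, the label is conditionally
distributed according to `Λ`, and `inf_{l ∈ c} ∑_{k ∈ S} l k ≥ 1 - δ`, then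
`ℙ[Y_{n+1} ∈ S] ≥ (1 - δ)(1 - α)`. -/
theorem label_coverage (Y : Type*) [Fintype Y] [MeasurableSpace Y]
    [MeasurableSingletonClass Y]
    (Ω : Type*) [MeasureSpace Ω] [IsProbabilityMeasure (ℙ : Measure Ω)]
    (Λ : Ω → (Y → ℝ)) (hΛ : Measurable Λ)
    (Ylab : Ω → Y) (hY : Measurable Ylab)
    (hcond : ∀ B : Set (Y → ℝ), MeasurableSet B → ∀ k : Y,
      (ℙ {ω | Λ ω ∈ B ∧ Ylab ω = k}).toReal = ∫ l in B, l k ∂(Measure.map Λ ℙ))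
    (c : Set (Y → ℝ)) (hc : MeasurableSet c) (hcne : c.Nonempty)
    (hsimplex : ∀ l ∈ c, (∀ k, 0 ≤ l k) ∧ ∑ k, l k = 1)
    (α δ : ℝ) (hα0 : 0 ≤ α) (hα1 : α ≤ 1) (hδ0 : 0 ≤ δ) (hδ1 : δ ≤ 1)
    (hcov : (ℙ {ω | Λ ω ∈ c}).toReal ≥ 1 - α)
    (S : Finset Y)
    (hS : (⨅ l : c, ∑ k ∈ S, (l : Y → ℝ) k) ≥ 1 - δ) :
    (ℙ {ω | Ylab ω ∈ S}).toReal ≥ (1 - δ) * (1 - α) := by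
  set μ := Measure.map Λ ℙ with hμ
  have hμprob : IsProbabilityMeasure μ := Measure.isProbabilityMeasure_map hΛ.aemeasurable
  -- pointwise bound on c
  have hle1 : ∀ l ∈ c, ∀ k : Y, l k ≤ 1 := by
    intro l hl k
    obtain ⟨hnn, hsum⟩ := hsimplex l hl
    calc l k ≤ ∑ j, l j := Finset.single_le_sum (fun j _ => hnn j) (Finset.mem_univ k)
    _ = 1 := hsum
  -- integrability of each coordinate on c
  have hint : ∀ k : Y, Integrable (fun l : Y → ℝ => l k) (μ.restrict c) := by
    intro k
    refine Integrable.mono' (integrable_const 1)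
      (measurable_pi_apply k).aestronglyMeasurable ?_
    rw [ae_restrict_iff' hc]
    filter_upwards with l hl
    rw [Real.norm_eq_abs, abs_le]
    exact ⟨by linarith [(hsimplex l hl).1 k], hle1 l hl k⟩
  -- pointwise lower bound from infimum
  have hbdd : BddBelow (Set.range fun l : c => ∑ k ∈ S, (l : Y → ℝ) k) := by
    refine ⟨0, ?_⟩
    rintro x ⟨⟨l, hl⟩, rfl⟩
    exact Finset.sum_nonneg fun k _ => (hsimplex l hl).1 k
  have hptS : ∀ l ∈ c, (1 - δ) ≤ ∑ k ∈ S, l k := by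
    intro l hl
    exact le_trans hS (ciInf_le hbdd ⟨l, hl⟩)
  -- lower bound on ∫_c ∑
  have hμc : (μ c).toReal = (ℙ {ω | Λ ω ∈ c}).toReal := by
    rw [hμ, Measure.map_apply hΛ hc]; rfl
  have hintsum : Integrable (fun l : Y → ℝ => ∑ k ∈ S, l k) (μ.restrict c) :=
    integrable_finset_sum S fun k _ => hint k
  have hI : ∫ l in c, (∑ k ∈ S, l k) ∂μ ≥ (1 - δ) * (μ c).toReal := by
    have h1 : ∫ l in c, (1 - δ) ∂μ = (1 - δ) * (μ c).toReal := by
      rw [setIntegral_const, smul_eq_mul, mul_comm, Measure.real]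
    rw [← h1]
    refine setIntegral_mono_on (integrable_const _) hintsum hc ?_
    intro l hl; exact hptS l hl
  -- ∫_c ∑ = ∑ ∫_c = ∑ ℙ[Λ∈c ∧ Y=k] = ℙ[Λ∈c ∧ Y∈S]
  have hswap : ∫ l in c, (∑ k ∈ S, l k) ∂μ
      = ∑ k ∈ S, (ℙ {ω | Λ ω ∈ c ∧ Ylab ω = k}).toReal := by
    rw [integral_finset_sum S fun k _ => hint k]
    exact Finset.sum_congr rfl fun k _ => (hcond c hc k).symm
  have hdisj : ∑ k ∈ S, (ℙ {ω | Λ ω ∈ c ∧ Ylab ω = k})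
      = ℙ {ω | Λ ω ∈ c ∧ Ylab ω ∈ S} := by
    have : {ω | Λ ω ∈ c ∧ Ylab ω ∈ S} = ⋃ k ∈ S, {ω | Λ ω ∈ c ∧ Ylab ω = k} := by
      ext ω; simp [and_comm, exists_and_left]
    rw [this, measure_biUnion_finset]
    · intro i _ j _ hij
      refine Set.disjoint_left.2 ?_
      rintro ω ⟨_, hi⟩ ⟨_, hj⟩
      exact hij (hi ▸ hj ▸ rfl)
    · intro k _
      exact (hΛ hc).inter (hY (measurableSet_singleton k))
  have hfin : ∀ k, ℙ {ω | Λ ω ∈ c ∧ Ylab ω = k} ≠ ∞ := fun k => measure_ne_top _ _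
  have hsum_toReal : ∑ k ∈ S, (ℙ {ω | Λ ω ∈ c ∧ Ylab ω = k}).toReal
      = (ℙ {ω | Λ ω ∈ c ∧ Ylab ω ∈ S}).toReal := by
    rw [← hdisj, ENNReal.toReal_sum fun k _ => hfin k]
  have hmono : (ℙ {ω | Λ ω ∈ c ∧ Ylab ω ∈ S}).toReal ≤ (ℙ {ω | Ylab ω ∈ S}).toReal := by
    refine ENNReal.toReal_mono (measure_ne_top _ _) (measure_mono ?_)
    intro ω hω; exact hω.2
  have hfinal : (1 - δ) * (μ c).toReal ≥ (1 - δ) * (1 - α) := by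
    rw [hμc]
    exact mul_le_mul_of_nonneg_left hcov (by linarith)
  calc (ℙ {ω | Ylab ω ∈ S}).toReal
      ≥ (ℙ {ω | Λ ω ∈ c ∧ Ylab ω ∈ S}).toReal := hmono
    _ = ∫ l in c, (∑ k ∈ S, l k) ∂μ := by rw [hswap, hsum_toReal]
    _ ≥ (1 - δ) * (μ c).toReal := hI
    _ ≥ (1 - δ) * (1 - α) := hfinal
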